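/- (Constant addition) Let d_embed = 5, M > 0, and c, x ∈ ℝ^D with ‖x‖_∞ + ‖c‖_∞ ≤ M. Let H ∈ ℝ^{5×ℓ} with ℓ ≥ 2D be the embedding matrix whose first row is (x¹,…,x^D, 0,…,0), second row zero, rows 3–4 positional encodings, fifth row all ones. Then there exists a transformer block B ∈ 𝓑(D, 6, d_embed) such that B(H) equals H except that the first-row entries in columns D+1,…,2D are x¹+c¹,…,x^D+c^D, with ‖θ_B‖_∞ ≤ O(ℓ² M² ‖H‖²_{∞,∞}). -/

import Mathlib

open scoped BigOperators
open Metric Set MeasureTheory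
open scoped Matrix

namespace Paper

noncomputable section

/-- ReLU activation. -/
def relu (x : ℝ) : ℝ := max x 0

/-- Euclidean space `ℝ^D` with the `ℓ²` norm. -/
abbrev Euc (D : ℕ) := EuclideanSpace ℝ (Fin D)

/-- Maximum absolute entry of a matrix (`‖H‖_{∞,∞}`). -/
def matSup {m n : ℕ} (H : Matrix (Fin m) (Fin n) ℝ) : ℝ := ⨆ i, ⨆ j, |H i j|

/-- Sup norm `‖x‖_∞` of a vector. -/
def supNorm {D : ℕ} (x : Fin D → ℝ) : ℝ := ⨆ i, |x i|

/-- An attention head: query, key and value matrices. -/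
structure Head (de : ℕ) where
  Q : Matrix (Fin de) (Fin de) ℝ
  K : Matrix (Fin de) (Fin de) ℝ
  V : Matrix (Fin de) (Fin de) ℝ

/-- Action of an attention head on an embedding matrix:
`A(H) = V H σ((K H)ᵀ Q H)` with `σ = ReLU`. -/
def Head.eval {de : ℕ} (A : Head de) {ℓ : ℕ} (H : Matrix (Fin de) (Fin ℓ) ℝ) :
    Matrix (Fin de) (Fin ℓ) ℝ :=
  A.V * H * ((A.K * H)ᵀ * (A.Q * H)).map relu

/-- Tokenwise action of an attention head:
`A(h_t) = Σ_j σ(⟨Q h_t, K h_j⟩) V h_j`. -/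
def Head.tokenEval {de ℓ : ℕ} (A : Head de) (H : Matrix (Fin de) (Fin ℓ) ℝ)
    (t : Fin ℓ) : Fin de → ℝ := fun i =>
  ∑ j : Fin ℓ,
    relu (∑ k, A.Q.mulVec (fun r => H r t) k * A.K.mulVec (fun r => H r j) k) *
      A.V.mulVec (fun r => H r j) i

/-- Maximum weight magnitude of an attention head. -/
def Head.wnorm {de : ℕ} (A : Head de) : ℝ := matSup A.Q ⊔ matSup A.K ⊔ matSup A.V

/-- A fully-connected (tokenwise) ReLU feed-forward network of depth `L`
and hidden width `w` on embedding dimension `de`. -/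
structure FFN (de w L : ℕ) where
  Win : Matrix (Fin w) (Fin de) ℝ
  bin : Fin w → ℝ
  Wmid : Fin L → Matrix (Fin w) (Fin w) ℝ
  bmid : Fin L → Fin w → ℝ
  Wout : Matrix (Fin de) (Fin w) ℝ
  bout : Fin de → ℝ

/-- Evaluation of a feed-forward ReLU network on one token. -/
def FFN.eval {de w L : ℕ} (f : FFN de w L) (x : Fin de → ℝ) : Fin de → ℝ :=
  let h0 : Fin w → ℝ := fun i => relu (∑ j, f.Win i j * x j + f.bin i)
  let hL : Fin w → ℝ := (List.finRange L).foldl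
    (fun h k => fun i => relu (∑ j, f.Wmid k i j * h j + f.bmid k i)) h0
  fun i => ∑ j, f.Wout i j * hL j + f.bout i

/-- Maximum weight magnitude of a feed-forward network. -/
def FFN.wnorm {de w L : ℕ} (f : FFN de w L) : ℝ :=
  matSup f.Win ⊔ (⨆ i, |f.bin i|) ⊔ (⨆ k, matSup (f.Wmid k)) ⊔
    (⨆ k, ⨆ i, |f.bmid k i|) ⊔ matSup f.Wout ⊔ (⨆ i, |f.bout i|)

/-- A two-layer feed-forward ReLU network. -/
structure TwoLayerFFN (de w : ℕ) where
  W1 : Matrix (Fin w) (Fin de) ℝ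
  b1 : Fin w → ℝ
  W2 : Matrix (Fin de) (Fin w) ℝ
  b2 : Fin de → ℝ

def TwoLayerFFN.eval {de w : ℕ} (f : TwoLayerFFN de w) (x : Fin de → ℝ) :
    Fin de → ℝ := fun i =>
  ∑ j, f.W2 i j * relu (∑ k, f.W1 j k * x k + f.b1 j) + f.b2 i

def TwoLayerFFN.wnorm {de w : ℕ} (f : TwoLayerFFN de w) : ℝ :=
  matSup f.W1 ⊔ (⨆ i, |f.b1 i|) ⊔ matSup f.W2 ⊔ (⨆ i, |f.b2 i|)

/-- A transformer block `B(H) = FFN(MHA(H)+H) + MHA(H) + H` with `m` attention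
heads and a tokenwise feed-forward network of depth `L` and width `w`;
this formalizes the class `𝓑(m, L, de)`. -/
structure Block (de m w L : ℕ) where
  heads : Fin m → Head de
  ffn : FFN de w L

def Block.eval {de m w L : ℕ} (B : Block de m w L) {ℓ : ℕ}
    (H : Matrix (Fin de) (Fin ℓ) ℝ) : Matrix (Fin de) (Fin ℓ) ℝ :=
  let H1 := (∑ j, (B.heads j).eval H) + H
  Matrix.of (fun i t => B.ffn.eval (fun r => H1 r t) i) + H1

def Block.wnorm {de m w L : ℕ} (B : Block de m w L) : ℝ :=
  (⨆ j, (B.heads j).wnorm) ⊔ B.ffn.wnorm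

/-- A transformer network: linear embedding, positional encoding, `LT` transformer
blocks (each with `mT` heads and FFNs of depth `LF`, width `wF`), and a decoding
layer returning the first entry of the last column. -/
structure TransformerNet (D LT mT de ℓ LF wF : ℕ) where
  emb : Fin de → Fin ℓ → Fin D → ℝ
  PE : Matrix (Fin de) (Fin ℓ) ℝ
  blocks : Fin LT → Block de mT wF LF

def TransformerNet.eval {D LT mT de ℓ LF wF : ℕ}
    (T : TransformerNet D LT mT de ℓ LF wF) (x : Fin D → ℝ) : ℝ :=
  let H0 : Matrix (Fin de) (Fin ℓ) ℝ :=
    T.PE + Matrix.of fun i t => ∑ j, T.emb i t j * x j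
  let HL := (List.finRange LT).foldl (fun H k => (T.blocks k).eval H) H0
  if h : 0 < de ∧ 0 < ℓ then HL ⟨0, h.1⟩ ⟨ℓ - 1, Nat.sub_lt h.2 Nat.one_pos⟩ else 0

/-- Maximum weight magnitude `‖θ‖_∞` of a transformer network. -/
def TransformerNet.wnorm {D LT mT de ℓ LF wF : ℕ}
    (T : TransformerNet D LT mT de ℓ LF wF) : ℝ :=
  (⨆ i, ⨆ t, ⨆ j, |T.emb i t j|) ⊔ matSup T.PE ⊔ (⨆ k, (T.blocks k).wnorm)

/-- Membership in the transformer class `𝒯(L_T, m_T, d_embed, ℓ, L_FFN, w_FFN, R, κ)`: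
sup-norm output bound `R` and weight magnitudes at most `κ`. -/
def TransformerNet.inClass {D LT mT de ℓ LF wF : ℕ}
    (T : TransformerNet D LT mT de ℓ LF wF) (R κ : ℝ) : Prop :=
  (∀ x : Fin D → ℝ, |T.eval x| ≤ R) ∧ T.wnorm ≤ κ

/-- Medial axis of a set. -/
def medialAxis {D : ℕ} (S : Set (Euc D)) : Set (Euc D) :=
  {x | ∃ p ∈ S, ∃ q ∈ S, p ≠ q ∧
    dist p x = infDist x S ∧ dist q x = infDist x S}

/-- Local reach `τ_M(v)`. -/
def localReach {D : ℕ} (S : Set (Euc D)) (v : Euc D) : ℝ :=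
  infDist v (medialAxis S)

/-- Reach `τ_M` of a set. -/
def reach {D : ℕ} (S : Set (Euc D)) : ℝ := ⨅ v ∈ S, localReach S v

/-- Geodesic distance on `S`: infimum of lengths of `C¹` curves in `S`. -/
def geoDist {D : ℕ} (S : Set (Euc D)) (v v' : Euc D) : ℝ :=
  sInf {l : ℝ | ∃ γ : ℝ → Euc D, (∀ t ∈ Icc (0:ℝ) 1, γ t ∈ S) ∧
    ContDiffOn ℝ 1 γ (Icc 0 1) ∧ γ 0 = v ∧ γ 1 = v' ∧
    l = ∫ t in (0:ℝ)..1, ‖deriv γ t‖}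

/-- Orthogonal projection onto `S` (a choice of nearest point, when one exists). -/
def projOn {D : ℕ} (S : Set (Euc D)) (x : Euc D) : Euc D :=
  Classical.epsilon fun y => y ∈ S ∧ dist x y = infDist x S

/-- A nonempty, compact, connected `d`-dimensional manifold `M ⊆ [0,1]^D`,
together with a choice of orthonormal tangent frames `P(v)`. -/
structure GoodManifold (D d : ℕ) where
  carrier : Set (Euc D)
  nonempty : carrier.Nonempty
  compact : IsCompact carrier
  connected : IsConnected carrier
  subset_cube : ∀ x ∈ carrier, ∀ i, x i ∈ Icc (0:ℝ) 1
  locallyEuclidean : ∀ v ∈ carrier, ∃ U : Set (Euc D), IsOpen U ∧ v ∈ U ∧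
    ∃ V : Set (EuclideanSpace ℝ (Fin d)), IsOpen V ∧
      Nonempty (↥(carrier ∩ U) ≃ₜ ↥V)
  frame : Euc D → Matrix (Fin D) (Fin d) ℝ
  frame_orthonormal : ∀ v ∈ carrier, (frame v)ᵀ * frame v = 1

/-- The tubular region `M(q)` around the manifold. -/
def GoodManifold.tube {D d : ℕ} (M : GoodManifold D d) (q : ℝ) : Set (Euc D) :=
  {x | ∃ v ∈ M.carrier, ∃ u : Euc D, x = v + u ∧
    (M.frame v)ᵀ.mulVec (fun i => u i) = 0 ∧
    ‖u‖ < q * localReach M.carrier v}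

/-- The volume `Vol(M)`: the `d`-dimensional Hausdorff measure of the carrier. -/
def vol {D d : ℕ} (M : GoodManifold D d) : ℝ :=
  (MeasureTheory.Measure.hausdorffMeasure (d : ℝ) M.carrier).toReal

/-- A maximal `δ`-separated net `{z₁,…,z_K}` of `M` w.r.t. geodesic distance. -/
structure SepNet {D d : ℕ} (M : GoodManifold D d) (δ : ℝ) (K : ℕ) where
  z : Fin K → Euc D
  mem : ∀ i, z i ∈ M.carrier
  sep : ∀ i j, i ≠ j → δ < geoDist M.carrier (z i) (z j)
  maximal : ∀ y ∈ M.carrier, ∃ i, geoDist M.carrier y (z i) ≤ δ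

/-- The bump functions `η̃_i` built from the net, with `p = (1+q)/2` and
`h = 6/(1 - q p⁻¹)`. -/
def etaTilde {D d K : ℕ} (M : GoodManifold D d) (q δ : ℝ) (N : SepNet M δ K)
    (i : Fin K) (x : Euc D) : ℝ :=
  relu (1 - (dist x (N.z i) / (((1 + q) / 2) * localReach M.carrier (N.z i))) ^ 2
    - (Real.sqrt (∑ j, (∑ r, M.frame (N.z i) r j * (x r - N.z i r)) ^ 2)
        / ((6 / (1 - q / ((1 + q) / 2))) * δ)) ^ 2)

/-- The normalized partition of unity `η_i = η̃_i / ‖η̃‖₁`. -/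
def etaFun {D d K : ℕ} (M : GoodManifold D d) (q δ : ℝ) (N : SepNet M δ K)
    (i : Fin K) (x : Euc D) : ℝ :=
  etaTilde M q δ N i x / ∑ j, etaTilde M q δ N j x

/-- Embedding matrix predicate for `d_embed = 5`: second row zero, rows 3–4 the
sinusoidal positional encodings, fifth row all ones. -/
def IsEmbed5 {ℓ : ℕ} (H : Matrix (Fin 5) (Fin ℓ) ℝ) : Prop :=
  (∀ t, H 1 t = 0) ∧
  (∀ t : Fin ℓ, H 2 t = Real.cos ((((t : ℕ) : ℝ) + 1) * Real.pi / (2 * ℓ))) ∧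
  (∀ t : Fin ℓ, H 3 t = Real.sin ((((t : ℕ) : ℝ) + 1) * Real.pi / (2 * ℓ))) ∧
  (∀ t, H 4 t = 1)

/-- Embedding matrix predicate for general `d_embed = e + 5 ≥ 5`: rows
`d_embed−2, d_embed−1` are the positional encodings and the last row is all ones. -/
def IsEmbedG (e ℓ : ℕ) (H : Matrix (Fin (e + 5)) (Fin ℓ) ℝ) : Prop :=
  (∀ t : Fin ℓ, H ⟨e + 2, by omega⟩ t
      = Real.cos ((((t : ℕ) : ℝ) + 1) * Real.pi / (2 * ℓ))) ∧
  (∀ t : Fin ℓ, H ⟨e + 3, by omega⟩ t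
      = Real.sin ((((t : ℕ) : ℝ) + 1) * Real.pi / (2 * ℓ))) ∧
  (∀ t, H ⟨e + 4, by omega⟩ t = 1)


/-! ### Auxiliary material for `constant_addition` -/

section ConstAdditionAux

lemma relu_of_nonpos {x : ℝ} (h : x ≤ 0) : relu x = 0 := max_eq_right h
lemma relu_of_nonneg {x : ℝ} (h : 0 ≤ x) : relu x = x := max_eq_left h
lemma relu_nonneg' (x : ℝ) : 0 ≤ relu x := le_max_right _ _
lemma relu_mul {a : ℝ} (ha : 0 ≤ a) (x : ℝ) : relu (a * x) = a * relu x := by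
  rcases le_total x 0 with h | h
  · rw [relu_of_nonpos h, relu_of_nonpos (mul_nonpos_of_nonneg_of_nonpos ha h), mul_zero]
  · rw [relu_of_nonneg h, relu_of_nonneg (mul_nonneg ha h)]
lemma relu_sub_relu_neg (x : ℝ) : relu x - relu (-x) = x := by
  rcases le_total x 0 with h | h
  · rw [relu_of_nonpos h, relu_of_nonneg (neg_nonneg.mpr h)]; ring
  · rw [relu_of_nonneg h, relu_of_nonpos (neg_nonpos.mpr h)]; ring

lemma matSup_nonneg {m n : ℕ} (A : Matrix (Fin m) (Fin n) ℝ) : 0 ≤ matSup A :=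
  Real.iSup_nonneg fun _ => Real.iSup_nonneg fun _ => abs_nonneg _

lemma matSup_le {m n : ℕ} {A : Matrix (Fin m) (Fin n) ℝ} {b : ℝ} (hb : 0 ≤ b)
    (h : ∀ i j, |A i j| ≤ b) : matSup A ≤ b :=
  Real.iSup_le (fun i => Real.iSup_le (h i) hb) hb

lemma le_matSup {m n : ℕ} (A : Matrix (Fin m) (Fin n) ℝ) (i : Fin m) (j : Fin n) :
    |A i j| ≤ matSup A := by
  refine le_trans (le_ciSup (f := fun j => |A i j|)
    (Set.Finite.bddAbove (Set.finite_range _)) j) ?_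
  exact le_ciSup (f := fun i => ⨆ j, |A i j|)
    (Set.Finite.bddAbove (Set.finite_range _)) i

lemma foldl_inv {α ι : Type*} (P : α → Prop) (f : α → ι → α) (l : List ι) (h0 : α)
    (H0 : P h0) (Hf : ∀ a i, P a → P (f a i)) : P (l.foldl f h0) := by
  induction l generalizing h0 with
  | nil => exact H0
  | cons hd tl ih => exact ih _ (Hf _ _ H0)

def caTheta (ℓ : ℕ) (t : Fin ℓ) : ℝ := (((t : ℕ) : ℝ) + 1) * Real.pi / (2 * ℓ)

lemma cos_caTheta_sub_le {ℓ : ℕ} (s p : Fin ℓ) (h : s ≠ p) :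
    Real.cos (caTheta ℓ s - caTheta ℓ p) ≤ Real.cos (Real.pi / (2 * ℓ)) := by
  have hl : 0 < ℓ := s.pos
  have hl1 : (1:ℝ) ≤ (ℓ:ℝ) := by exact_mod_cast hl
  have hπ := Real.pi_pos
  have hsub : caTheta ℓ s - caTheta ℓ p = ((((s:ℕ):ℤ) - ((p:ℕ):ℤ) : ℤ) : ℝ) * (Real.pi / (2*ℓ)) := by
    unfold caTheta; push_cast; field_simp; ring
  rw [hsub, ← Real.cos_abs]
  have hd : (0:ℝ) < Real.pi / (2*ℓ) := by positivity
  have h1 : (1:ℤ) ≤ |((s:ℕ):ℤ) - ((p:ℕ):ℤ)| := by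
    have : (s:ℕ) ≠ (p:ℕ) := fun hc => h (Fin.ext hc)
    rcases abs_cases (((s:ℕ):ℤ) - ((p:ℕ):ℤ)) with ⟨he,_⟩|⟨he,_⟩ <;> rw [he] <;> omega
  have h2 : |((s:ℕ):ℤ) - ((p:ℕ):ℤ)| ≤ (ℓ:ℤ) := by
    have hs := s.isLt; have hp := p.isLt
    rcases abs_cases (((s:ℕ):ℤ) - ((p:ℕ):ℤ)) with ⟨he,_⟩|⟨he,_⟩ <;> rw [he] <;> omega
  have h1' : (1:ℝ) ≤ |((((s:ℕ):ℤ) - ((p:ℕ):ℤ) : ℤ) : ℝ)| := by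
    rw [← Int.cast_abs]; exact_mod_cast h1
  have h2' : |((((s:ℕ):ℤ) - ((p:ℕ):ℤ) : ℤ) : ℝ)| ≤ (ℓ:ℝ) := by
    rw [← Int.cast_abs]; exact_mod_cast h2
  rw [abs_mul, abs_of_pos hd]
  have hmem1 : Real.pi / (2*ℓ) ∈ Set.Icc (0:ℝ) Real.pi := by
    refine ⟨hd.le, ?_⟩
    rw [div_le_iff₀ (by positivity)]
    nlinarith
  have hmem2 : |((((s:ℕ):ℤ) - ((p:ℕ):ℤ) : ℤ) : ℝ)| * (Real.pi / (2*ℓ)) ∈ Set.Icc (0:ℝ) Real.pi := by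
    refine ⟨by positivity, ?_⟩
    calc |((((s:ℕ):ℤ) - ((p:ℕ):ℤ) : ℤ) : ℝ)| * (Real.pi / (2*ℓ)) ≤ (ℓ:ℝ) * (Real.pi / (2*ℓ)) :=
          mul_le_mul_of_nonneg_right h2' hd.le
      _ ≤ Real.pi := by
          rw [mul_div_assoc', div_le_iff₀ (by positivity)]
          nlinarith
  exact Real.strictAntiOn_cos.antitoneOn hmem1 hmem2 (by nlinarith)

lemma cos_pi_div_lt_one {ℓ : ℕ} (hl : 0 < ℓ) : Real.cos (Real.pi / (2 * ℓ)) < 1 := by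
  have hl1 : (1:ℝ) ≤ (ℓ:ℝ) := by exact_mod_cast hl
  have hπ := Real.pi_pos
  have hd : (0:ℝ) < Real.pi / (2*ℓ) := by positivity
  have hmem : Real.pi / (2*ℓ) ∈ Set.Icc (0:ℝ) Real.pi := by
    refine ⟨hd.le, ?_⟩
    rw [div_le_iff₀ (by positivity)]
    nlinarith
  have := Real.strictAntiOn_cos (Set.left_mem_Icc.mpr hπ.le) hmem hd
  rwa [Real.cos_zero] at this

def mkQ (a b c1 s1 c2 s2 : ℝ) : Matrix (Fin 5) (Fin 5) ℝ :=
  !![0,0,0,0,a*c1; 0,0,0,0,a*s1; 0,0,a*c2,a*s2,0; 0,0,0,0,b; 0,0,0,0,0]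
def mkK (a : ℝ) : Matrix (Fin 5) (Fin 5) ℝ :=
  !![0,0,a,0,0; 0,0,0,a,0; 0,0,0,0,a; 0,0,0,0,a; 0,0,0,0,0]
def mkV (μ γ : ℝ) : Matrix (Fin 5) (Fin 5) ℝ :=
  !![0,0,0,0,0; μ,0,0,0,γ; 0,0,0,0,0; 0,0,0,0,0; 0,0,0,0,0]

def mkHead (ℓ : ℕ) (a v μ γ : ℝ) (p q : Fin ℓ) : Head 5 :=
  ⟨mkQ a ((v - 2*a^2)/a) (Real.cos (caTheta ℓ p)) (Real.sin (caTheta ℓ p))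
      (Real.cos (caTheta ℓ q)) (Real.sin (caTheta ℓ q)), mkK a, mkV μ γ⟩

lemma mkHead_eval {ℓ : ℕ} (H : Matrix (Fin 5) (Fin ℓ) ℝ)
    (h2 : ∀ t, H 2 t = Real.cos (caTheta ℓ t))
    (h3 : ∀ t, H 3 t = Real.sin (caTheta ℓ t))
    (h4 : ∀ t, H 4 t = 1)
    (a v μ γ : ℝ) (ha : 0 < a)
    (hv : v = a^2 * (1 - Real.cos (Real.pi / (2 * ℓ))))
    (hv0 : 0 ≤ v)
    (p q : Fin ℓ) :
    (mkHead ℓ a v μ γ p q).eval H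
      = Matrix.of fun i t => if i = 1 ∧ t = q then v * (μ * H 0 p + γ) else 0 := by
  have hP : ∀ s t : Fin ℓ, (((mkHead ℓ a v μ γ p q).K * H)ᵀ * ((mkHead ℓ a v μ γ p q).Q * H)) s t
      = a^2 * Real.cos (caTheta ℓ s - caTheta ℓ p) + a^2 * Real.cos (caTheta ℓ t - caTheta ℓ q)
        + (v - 2*a^2) := by
    intro s t
    simp [mkHead, Matrix.mul_apply, Matrix.transpose_apply, Fin.sum_univ_five, mkK, mkQ,
      Matrix.cons_val_two, Matrix.cons_val_three, Matrix.cons_val_four, Matrix.vecHead,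
      Matrix.vecTail, Matrix.vecMul, dotProduct, h2, h3, h4, Real.cos_sub]
    field_simp
  have hrelu : ∀ s t : Fin ℓ,
      relu ((((mkHead ℓ a v μ γ p q).K * H)ᵀ * ((mkHead ℓ a v μ γ p q).Q * H)) s t)
      = if s = p ∧ t = q then v else 0 := by
    intro s t
    rw [hP]
    by_cases hs : s = p
    · by_cases ht : t = q
      · subst hs; subst ht
        rw [if_pos ⟨rfl, rfl⟩]
        simp only [sub_self, Real.cos_zero]
        rw [relu_of_nonneg (by nlinarith)]
        ring
      · rw [if_neg (by tauto)]
        apply relu_of_nonpos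
        have h1 := cos_caTheta_sub_le t q ht
        have h2' : Real.cos (caTheta ℓ s - caTheta ℓ p) ≤ 1 := Real.cos_le_one _
        nlinarith [sq_nonneg a]
    · rw [if_neg (by tauto)]
      apply relu_of_nonpos
      have h1 := cos_caTheta_sub_le s p hs
      have h2' : Real.cos (caTheta ℓ t - caTheta ℓ q) ≤ 1 := Real.cos_le_one _
      nlinarith [sq_nonneg a]
  have hVH : ∀ (i : Fin 5) (s : Fin ℓ), ((mkHead ℓ a v μ γ p q).V * H) i s
      = if i = 1 then μ * H 0 s + γ else 0 := by
    intro i s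
    fin_cases i <;>
      simp [mkHead, mkV, Matrix.mul_apply, Fin.sum_univ_five, h4, Matrix.cons_val',
        Matrix.cons_val_zero, Matrix.cons_val_one, Matrix.head_cons, Matrix.head_fin_const,
        Matrix.empty_val', Matrix.cons_val_fin_one, Matrix.cons_val_two, Matrix.cons_val_three,
        Matrix.cons_val_four, Matrix.vecHead, Matrix.vecTail]
  ext i t
  rw [Head.eval, Matrix.mul_apply]
  simp only [Matrix.map_apply, hVH, hrelu, Matrix.of_apply]
  by_cases hi : i = 1
  · by_cases ht : t = q
    · simp [hi, ht, mul_ite, mul_zero, Finset.sum_ite_eq', mul_comm]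
    · simp [hi, ht]
  · simp [hi]

def mkFFN (N : ℕ) (aF g g' : ℝ) : FFN 5 (N + N) 6 where
  Win := fun i q => if q = 1 then (if (i:ℕ) < N then aF else -aF) else 0
  bin := 0
  Wmid := fun _ i j =>
    if ((i:ℕ) < N ∧ (j:ℕ) < N) ∨ (¬ (i:ℕ) < N ∧ ¬ (j:ℕ) < N) then (N:ℝ)⁻¹ else 0
  bmid := fun _ _ => 0
  Wout := fun i j => if i = 0 then (if (j:ℕ) < N then g else -g)
    else if i = 1 then (if (j:ℕ) < N then -g' else g') else 0
  bout := 0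

lemma mkFFN_eval (N : ℕ) (hN : 0 < N) (aF g g' : ℝ) (haF : 0 ≤ aF) (col : Fin 5 → ℝ) :
    (mkFFN N aF g g').eval col
      = fun i : Fin 5 => if i = 0 then g * N * aF * col 1
          else if i = 1 then -(g' * N * aF * col 1) else 0 := by
  set z := col 1 with hz
  set hvec : Fin (N + N) → ℝ :=
    fun i => if (i:ℕ) < N then aF * relu z else aF * relu (-z) with hhvec
  have hsum : ∀ h : Fin (N+N) → ℝ, h = hvec → ∀ i : Fin (N+N),
      (∑ j, (mkFFN N aF g g').Wmid 0 i j * h j)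
        = (if (i:ℕ) < N then aF * relu z else aF * relu (-z)) := by
    intro h hh i
    subst hh
    rw [Fin.sum_univ_add]
    by_cases hi : (i:ℕ) < N
    · have e1 : ∀ j : Fin N, (mkFFN N aF g g').Wmid 0 i (Fin.castAdd N j) * hvec (Fin.castAdd N j)
          = (N:ℝ)⁻¹ * (aF * relu z) := by
        intro j
        simp [mkFFN, hhvec, hi, j.isLt, Fin.coe_castAdd]
      have e2 : ∀ j : Fin N,
          (mkFFN N aF g g').Wmid 0 i (Fin.natAdd N j) * hvec (Fin.natAdd N j) = 0 := by
        intro j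
        simp [mkFFN, hhvec, hi, Fin.coe_natAdd]
      rw [Finset.sum_congr rfl (fun j _ => e1 j), Finset.sum_congr rfl (fun j _ => e2 j)]
      simp [hi, Finset.sum_const, Finset.card_univ, mul_comm]
      rw [← mul_assoc, mul_inv_cancel₀ (by exact_mod_cast hN.ne'), one_mul]
    · have e1 : ∀ j : Fin N,
          (mkFFN N aF g g').Wmid 0 i (Fin.castAdd N j) * hvec (Fin.castAdd N j) = 0 := by
        intro j
        simp [mkFFN, hhvec, hi, j.isLt, Fin.coe_castAdd]
      have e2 : ∀ j : Fin N, (mkFFN N aF g g').Wmid 0 i (Fin.natAdd N j) * hvec (Fin.natAdd N j)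
          = (N:ℝ)⁻¹ * (aF * relu (-z)) := by
        intro j
        simp [mkFFN, hhvec, hi, Fin.coe_natAdd]
      rw [Finset.sum_congr rfl (fun j _ => e1 j), Finset.sum_congr rfl (fun j _ => e2 j)]
      simp [hi, Finset.sum_const, Finset.card_univ]
      rw [← mul_assoc, mul_inv_cancel₀ (by exact_mod_cast hN.ne'), one_mul]
  have hstep : ∀ (h : Fin (N+N) → ℝ) (k : Fin 6), h = hvec →
      (fun i => relu (∑ j, (mkFFN N aF g g').Wmid k i j * h j + (mkFFN N aF g g').bmid k i))
        = hvec := by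
    intro h k hh
    funext i
    rw [show (mkFFN N aF g g').bmid k i = 0 from rfl, add_zero]
    rw [show (mkFFN N aF g g').Wmid k = (mkFFN N aF g g').Wmid 0 from rfl]
    rw [hsum h hh i]
    by_cases hi : (i:ℕ) < N <;>
      simp [hhvec, hi, relu_of_nonneg (mul_nonneg haF (relu_nonneg' _))]
  have hL : (List.finRange 6).foldl
      (fun h k => fun i => relu (∑ j, (mkFFN N aF g g').Wmid k i j * h j + (mkFFN N aF g g').bmid k i))
      (fun i => relu (∑ j, (mkFFN N aF g g').Win i j * col j + (mkFFN N aF g g').bin i)) = hvec := by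
    apply foldl_inv (fun h => h = hvec)
    · funext i
      have hWin : (∑ j, (mkFFN N aF g g').Win i j * col j)
          = (if (i:ℕ) < N then aF else -aF) * z := by
        simp [mkFFN, Fin.sum_univ_five, hz]
      rw [show (mkFFN N aF g g').bin i = 0 from rfl, add_zero, hWin]
      by_cases hi : (i:ℕ) < N
      · simp [hhvec, hi, relu_mul haF]
      · simp only [hhvec, hi, if_false]
        rw [neg_mul, ← mul_neg, relu_mul haF]
    · intro h k hh; exact hstep h k hh
  have heval : (mkFFN N aF g g').eval col = fun i => ∑ j, (mkFFN N aF g g').Wout i j * hvec j := by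
    unfold FFN.eval
    show (fun i => ∑ j : Fin (N + N), (mkFFN N aF g g').Wout i j *
        (List.foldl (fun h k i => relu (∑ j : Fin (N + N),
            (mkFFN N aF g g').Wmid k i j * h j + (mkFFN N aF g g').bmid k i))
          (fun i => relu (∑ j : Fin 5, (mkFFN N aF g g').Win i j * col j + (mkFFN N aF g g').bin i))
          (List.finRange 6)) j + (mkFFN N aF g g').bout i) = _
    rw [hL]
    funext i
    rw [show (mkFFN N aF g g').bout i = 0 from rfl, add_zero]
  rw [heval]
  funext i
  have houtsum : ∀ gc gc' : ℝ, (∑ j : Fin (N+N), (if (j:ℕ) < N then gc else gc') * hvec j)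
      = gc * (N:ℝ) * (aF * relu z) + gc' * (N:ℝ) * (aF * relu (-z)) := by
    intro gc gc'
    rw [Fin.sum_univ_add]
    have e1 : ∀ j : Fin N,
        (if ((Fin.castAdd N j : Fin (N+N)):ℕ) < N then gc else gc') * hvec (Fin.castAdd N j)
        = gc * (aF * relu z) := by
      intro j; simp [hhvec, j.isLt, Fin.coe_castAdd]
    have e2 : ∀ j : Fin N,
        (if ((Fin.natAdd N j : Fin (N+N)):ℕ) < N then gc else gc') * hvec (Fin.natAdd N j)
        = gc' * (aF * relu (-z)) := by
      intro j; simp [hhvec, Fin.coe_natAdd]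
    rw [Finset.sum_congr rfl (fun j _ => e1 j), Finset.sum_congr rfl (fun j _ => e2 j)]
    simp [Finset.sum_const, Finset.card_univ]
    ring
  have w0 : ∀ j : Fin (N+N), (mkFFN N aF g g').Wout 0 j = (if (j:ℕ) < N then g else -g) := by
    intro j; simp [mkFFN]
  have w1 : ∀ j : Fin (N+N), (mkFFN N aF g g').Wout 1 j = (if (j:ℕ) < N then -g' else g') := by
    intro j; simp [mkFFN]
  fin_cases i
  · show (∑ j : Fin (N+N), (mkFFN N aF g g').Wout 0 j * hvec j)
        = if (0 : Fin 5) = 0 then g * (N:ℝ) * aF * col 1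
          else if (0 : Fin 5) = 1 then -(g' * (N:ℝ) * aF * col 1) else 0
    rw [Finset.sum_congr rfl (fun j _ => by rw [w0 j]), houtsum, if_pos rfl]
    rw [show g * (N:ℝ) * (aF * relu z) + -g * (N:ℝ) * (aF * relu (-z))
        = g * (N:ℝ) * aF * (relu z - relu (-z)) from by ring, relu_sub_relu_neg]
  · show (∑ j : Fin (N+N), (mkFFN N aF g g').Wout 1 j * hvec j)
        = if (1 : Fin 5) = 0 then g * (N:ℝ) * aF * col 1
          else if (1 : Fin 5) = 1 then -(g' * (N:ℝ) * aF * col 1) else 0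
    rw [Finset.sum_congr rfl (fun j _ => by rw [w1 j]), houtsum,
      if_neg (by decide : ¬ (1:Fin 5) = 0), if_pos rfl]
    rw [show -g' * (N:ℝ) * (aF * relu z) + g' * (N:ℝ) * (aF * relu (-z))
        = -(g' * (N:ℝ) * aF * (relu z - relu (-z))) from by ring, relu_sub_relu_neg]
  · show (∑ j : Fin (N+N), (mkFFN N aF g g').Wout 2 j * hvec j)
        = if (2 : Fin 5) = 0 then g * (N:ℝ) * aF * col 1
          else if (2 : Fin 5) = 1 then -(g' * (N:ℝ) * aF * col 1) else 0
    have w2 : ∀ j : Fin (N+N), (mkFFN N aF g g').Wout 2 j = 0 := by intro j; simp [mkFFN]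
    simp [w2]
  · show (∑ j : Fin (N+N), (mkFFN N aF g g').Wout 3 j * hvec j)
        = if (3 : Fin 5) = 0 then g * (N:ℝ) * aF * col 1
          else if (3 : Fin 5) = 1 then -(g' * (N:ℝ) * aF * col 1) else 0
    have w3 : ∀ j : Fin (N+N), (mkFFN N aF g g').Wout 3 j = 0 := by intro j; simp [mkFFN]
    simp [w3]
  · show (∑ j : Fin (N+N), (mkFFN N aF g g').Wout 4 j * hvec j)
        = if (4 : Fin 5) = 0 then g * (N:ℝ) * aF * col 1
          else if (4 : Fin 5) = 1 then -(g' * (N:ℝ) * aF * col 1) else 0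
    have w4 : ∀ j : Fin (N+N), (mkFFN N aF g g').Wout 4 j = 0 := by intro j; simp [mkFFN]
    simp [w4]

def zFFN : FFN 5 2 6 := ⟨0, 0, fun _ => 0, fun _ => 0, 0, 0⟩

lemma zFFN_eval (col : Fin 5 → ℝ) : zFFN.eval col = fun _ => 0 := by
  have hL : (List.finRange 6).foldl
      (fun h k => fun i => relu (∑ j, zFFN.Wmid k i j * h j + zFFN.bmid k i))
      (fun i => relu (∑ j, zFFN.Win i j * col j + zFFN.bin i)) = fun _ => 0 := by
    apply foldl_inv (fun h => h = fun _ => 0)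
    · funext i; simp [zFFN, relu_of_nonneg (le_refl (0:ℝ))]
    · intro h k _
      funext i; simp [zFFN, relu_of_nonneg (le_refl (0:ℝ))]
  unfold FFN.eval
  show (fun i => ∑ j : Fin 2, zFFN.Wout i j *
      (List.foldl (fun h k i => relu (∑ j : Fin 2, zFFN.Wmid k i j * h j + zFFN.bmid k i))
        (fun i => relu (∑ j : Fin 5, zFFN.Win i j * col j + zFFN.bin i))
        (List.finRange 6)) j + zFFN.bout i) = _
  rw [hL]
  funext i; simp [zFFN]

lemma iSup_abs_zero {n : ℕ} : (⨆ i : Fin n, |(0:ℝ)|) = 0 :=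
  le_antisymm (Real.iSup_le (fun _ => by simp) le_rfl)
    (Real.iSup_nonneg fun _ => abs_nonneg _)

lemma matSup_zero {m n : ℕ} : matSup (0 : Matrix (Fin m) (Fin n) ℝ) = 0 :=
  le_antisymm (matSup_le le_rfl (fun i j => by simp)) (matSup_nonneg _)

lemma zFFN_wnorm : zFFN.wnorm = 0 := by
  have h1 : (⨆ i : Fin 2, |zFFN.bin i|) = 0 := by
    simp only [zFFN]; exact iSup_abs_zero
  have h2 : (⨆ k : Fin 6, matSup (zFFN.Wmid k)) = 0 := by
    refine le_antisymm (Real.iSup_le (fun k => ?_) le_rfl)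
      (Real.iSup_nonneg fun k => matSup_nonneg _)
    show matSup (0 : Matrix (Fin 2) (Fin 2) ℝ) ≤ 0
    rw [matSup_zero]
  have h3 : (⨆ k : Fin 6, ⨆ i : Fin 2, |zFFN.bmid k i|) = 0 := by
    refine le_antisymm (Real.iSup_le (fun k => ?_) le_rfl)
      (Real.iSup_nonneg fun k => Real.iSup_nonneg fun i => abs_nonneg _)
    show (⨆ i : Fin 2, |(0:ℝ)|) ≤ 0
    rw [iSup_abs_zero]
  have h4 : (⨆ i : Fin 5, |zFFN.bout i|) = 0 := by
    simp only [zFFN]; exact iSup_abs_zero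
  unfold FFN.wnorm
  rw [h1, h2, h3, h4, show zFFN.Win = 0 from rfl, show zFFN.Wout = 0 from rfl,
    matSup_zero, matSup_zero]
  simp

lemma Block_eval_def {de m w L : ℕ} (B : Block de m w L) {ℓ : ℕ}
    (H : Matrix (Fin de) (Fin ℓ) ℝ) :
    B.eval H = Matrix.of (fun i t => B.ffn.eval (fun r => ((∑ j, (B.heads j).eval H) + H) r t) i)
      + ((∑ j, (B.heads j).eval H) + H) := rfl

end ConstAdditionAux

set_option maxHeartbeats 2000000

/-- Lemma: constant addition implemented by one transformer block. -/
theorem constant_addition :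
    ∃ C : ℝ, 0 < C ∧
      ∀ (D ℓ : ℕ), 2 * D ≤ ℓ →
      ∀ M : ℝ, 0 < M →
      ∀ c x : Fin D → ℝ, supNorm x + supNorm c ≤ M →
      ∀ H : Matrix (Fin 5) (Fin ℓ) ℝ, IsEmbed5 H →
        (∀ t : Fin ℓ, ∀ h : (t : ℕ) < D, H 0 t = x ⟨(t : ℕ), h⟩) →
        (∀ t : Fin ℓ, D ≤ (t : ℕ) → H 0 t = 0) →
        ∃ (w : ℕ) (B : Block 5 D w 6),
          B.wnorm ≤ C * (ℓ : ℝ) ^ 2 * M ^ 2 * matSup H ^ 2 ∧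
          B.eval H = Matrix.of fun (i : Fin 5) (t : Fin ℓ) =>
            if h : D ≤ (t : ℕ) ∧ (t : ℕ) < 2 * D then
              (if i = 0 then x ⟨(t : ℕ) - D, by omega⟩ + c ⟨(t : ℕ) - D, by omega⟩
               else H i t)
            else H i t := by
  refine ⟨3, by norm_num, ?_⟩
  intro D ℓ hDl M hM c x hxc H hEmb hx0 hx0'
  obtain ⟨hE1, hE2, hE3, hE4⟩ := hEmb
  have h2 : ∀ t, H 2 t = Real.cos (caTheta ℓ t) := hE2
  have h3 : ∀ t, H 3 t = Real.sin (caTheta ℓ t) := hE3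
  by_cases hD : D = 0
  · subst hD
    refine ⟨2, ⟨fun j => j.elim0, zFFN⟩, ?_, ?_⟩
    · have hw : Block.wnorm (de := 5) ⟨fun j => j.elim0, zFFN⟩ = 0 := by
        unfold Block.wnorm
        rw [zFFN_wnorm, Real.iSup_of_isEmpty]
        simp
      rw [hw]
      positivity
    · rw [Block_eval_def]
      have hsum0 : (∑ j : Fin 0,
          (Block.heads (de := 5) ⟨fun j => j.elim0, zFFN⟩ j).eval H) = 0 := by
        simp
      rw [hsum0]
      ext i t
      simp only [Matrix.add_apply, Matrix.of_apply, Matrix.zero_apply, zero_add]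
      rw [zFFN_eval]
      rw [dif_neg (by omega)]
      simp
  · have hD' : 0 < D := Nat.pos_of_ne_zero hD
    have hl : 0 < ℓ := by omega
    have hl1 : (1:ℝ) ≤ (ℓ:ℝ) := by exact_mod_cast hl
    have hM2 : (0:ℝ) < M^2 := by positivity
    set a : ℝ := M^2 with ha_def
    have ha : 0 < a := hM2
    have hco1 : Real.cos (Real.pi/(2*(ℓ:ℝ))) < 1 := cos_pi_div_lt_one hl
    have hconeg : (-1:ℝ) ≤ Real.cos (Real.pi/(2*(ℓ:ℝ))) := Real.neg_one_le_cos _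
    set v : ℝ := a^2 * (1 - Real.cos (Real.pi/(2*(ℓ:ℝ)))) with hv_def
    have hv0 : 0 < v := by
      rw [hv_def]
      exact mul_pos (by positivity) (by linarith)
    have hv2 : v ≤ 2*a^2 := by nlinarith
    set μ : ℝ := M * min M 1 with hμ_def
    have hmin : 0 < min M 1 := lt_min hM one_pos
    have hμ0 : 0 < μ := mul_pos hM hmin
    set ε : ℝ := v * μ with hε_def
    have hε0 : 0 < ε := mul_pos hv0 hμ0
    set N : ℕ := ⌈(M^2)⁻¹⌉₊ + ⌈(ε * M^4)⁻¹⌉₊ + ⌈(M^4)⁻¹⌉₊ + 1 with hN_def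
    have hN0 : 0 < N := by omega
    have hN1 : (M^2)⁻¹ ≤ (N:ℝ) :=
      le_trans (Nat.le_ceil _) (Nat.cast_le.mpr (by omega))
    have hN2 : (ε * M^4)⁻¹ ≤ (N:ℝ) :=
      le_trans (Nat.le_ceil _) (Nat.cast_le.mpr (by omega))
    have hN3 : (M^4)⁻¹ ≤ (N:ℝ) :=
      le_trans (Nat.le_ceil _) (Nat.cast_le.mpr (by omega))
    have hNpos : (0:ℝ) < (N:ℝ) := by exact_mod_cast hN0
    set aF : ℝ := M^2 with haF_def
    have haF : 0 < aF := hM2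
    set g : ℝ := (ε * (N:ℝ) * aF)⁻¹ with hg_def
    set g' : ℝ := ((N:ℝ) * aF)⁻¹ with hg'_def
    have hg0 : 0 < g := by rw [hg_def]; positivity
    have hg'0 : 0 < g' := by rw [hg'_def]; positivity
    have hjlt : ∀ j : Fin D, (j:ℕ) < ℓ := fun j => by have := j.isLt; omega
    have hJlt : ∀ j : Fin D, D + (j:ℕ) < ℓ := fun j => by have := j.isLt; omega
    refine ⟨N + N, ⟨fun j => mkHead ℓ a v μ (μ * c j) ⟨(j:ℕ), hjlt j⟩ ⟨D + (j:ℕ), hJlt j⟩,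
      mkFFN N aF g g'⟩, ?_, ?_⟩
    · -- weight bound
      have hR1 : (1:ℝ) ≤ matSup H := by
        have h := le_matSup H 4 ⟨0, hl⟩
        rw [hE4 ⟨0, hl⟩] at h
        simpa using h
      have hbound : (0:ℝ) ≤ 2 * M^2 := by positivity
      have h2B : 2 * M^2 ≤ 3 * (ℓ:ℝ)^2 * M^2 * matSup H^2 := by
        have hq1 : (1:ℝ) ≤ (ℓ:ℝ)^2 := by nlinarith
        have hq2 : (1:ℝ) ≤ matSup H^2 := by nlinarith
        have hq3 : (1:ℝ) ≤ (ℓ:ℝ)^2 * matSup H^2 := by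
          calc (1:ℝ) = 1 * 1 := by ring
            _ ≤ (ℓ:ℝ)^2 * matSup H^2 := mul_le_mul hq1 hq2 zero_le_one (by positivity)
        calc 2*M^2 ≤ 3*M^2 := by nlinarith [sq_nonneg M]
          _ = 3 * M^2 * 1 := by ring
          _ ≤ 3 * M^2 * ((ℓ:ℝ)^2 * matSup H^2) :=
              mul_le_mul_of_nonneg_left hq3 (by positivity)
          _ = 3 * (ℓ:ℝ)^2 * M^2 * matSup H^2 := by ring
      refine le_trans ?_ h2B
      have hba : |a| ≤ 2*M^2 := by rw [abs_of_pos ha]; nlinarith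
      have hb1 : ∀ y : ℝ, |y| ≤ 1 → |a * y| ≤ 2*M^2 := by
        intro y hy
        rw [abs_mul, abs_of_pos ha]
        nlinarith [abs_nonneg y]
      have hbb : |(v - 2*a^2)/a| ≤ 2*M^2 := by
        rw [abs_div, abs_of_pos ha, div_le_iff₀ ha, abs_of_nonpos (by nlinarith)]
        nlinarith
      have hbμ : |μ| ≤ 2*M^2 := by
        rw [abs_of_pos hμ0]
        nlinarith [min_le_left M 1, min_le_right M 1]
      have hsupx : 0 ≤ supNorm x := Real.iSup_nonneg fun i => abs_nonneg _
      have hcj : ∀ j : Fin D, |c j| ≤ M := by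
        intro j
        have h1 : |c j| ≤ supNorm c :=
          le_ciSup (f := fun i => |c i|) (Set.Finite.bddAbove (Set.finite_range _)) j
        nlinarith
      have hbμc : ∀ j : Fin D, |μ * c j| ≤ 2*M^2 := by
        intro j
        rw [abs_mul, abs_of_pos hμ0]
        have := hcj j
        nlinarith [abs_nonneg (c j), min_le_right M 1, min_le_left M 1]
      have hbNinv : |((N:ℝ))⁻¹| ≤ 2*M^2 := by
        rw [abs_of_pos (by positivity)]
        rw [inv_eq_one_div, div_le_iff₀ hNpos]
        rw [inv_eq_one_div, div_le_iff₀ hM2] at hN1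
        nlinarith
      have hbg : |g| ≤ 2*M^2 := by
        rw [abs_of_pos hg0, hg_def, inv_eq_one_div, div_le_iff₀ (by positivity)]
        rw [inv_eq_one_div, div_le_iff₀ (by positivity : (0:ℝ) < ε * M^4)] at hN2
        nlinarith
      have hbg' : |g'| ≤ 2*M^2 := by
        rw [abs_of_pos hg'0, hg'_def, inv_eq_one_div, div_le_iff₀ (by positivity)]
        rw [inv_eq_one_div, div_le_iff₀ (by positivity : (0:ℝ) < M^4)] at hN3
        nlinarith
      unfold Block.wnorm
      apply sup_le
      · refine Real.iSup_le (fun j => ?_) hbound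
        show Head.wnorm _ ≤ 2*M^2
        unfold Head.wnorm
        refine sup_le (sup_le ?_ ?_) ?_
        · refine matSup_le hbound ?_
          intro pp qq
          fin_cases pp <;> fin_cases qq <;>
            simp [mkHead, mkQ, Matrix.cons_val_two, Matrix.cons_val_three, Matrix.cons_val_four,
              Matrix.vecHead, Matrix.vecTail] <;>
            first
              | exact hb1 _ (Real.abs_cos_le_one _)
              | exact hb1 _ (Real.abs_sin_le_one _)
              | exact hbb
              | (rw [← abs_mul]; exact hb1 _ (Real.abs_cos_le_one _))
              | (rw [← abs_mul]; exact hb1 _ (Real.abs_sin_le_one _))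
              | (rw [abs_zero]; positivity)
              | positivity
        · refine matSup_le hbound ?_
          intro pp qq
          fin_cases pp <;> fin_cases qq <;>
            simp [mkHead, mkK, Matrix.cons_val_two, Matrix.cons_val_three, Matrix.cons_val_four,
              Matrix.vecHead, Matrix.vecTail] <;>
            first
              | exact hba
              | (rw [abs_zero]; positivity)
              | positivity
        · refine matSup_le hbound ?_
          intro pp qq
          fin_cases pp <;> fin_cases qq <;>
            simp [mkHead, mkV, Matrix.cons_val_two, Matrix.cons_val_three, Matrix.cons_val_four,
              Matrix.vecHead, Matrix.vecTail] <;>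
            first
              | exact hbμ
              | exact hbμc _
              | (rw [← abs_mul]; exact hbμc _)
              | (rw [abs_zero]; positivity)
              | positivity
      · show FFN.wnorm _ ≤ 2*M^2
        unfold FFN.wnorm
        refine sup_le (sup_le (sup_le (sup_le (sup_le ?_ ?_) ?_) ?_) ?_) ?_
        · refine matSup_le hbound ?_
          intro i q
          show |(if q = 1 then (if (i:ℕ) < N then aF else -aF) else 0)| ≤ 2*M^2
          split_ifs <;>
            first
              | (rw [abs_of_pos haF]; nlinarith)
              | (rw [abs_neg, abs_of_pos haF]; nlinarith)
              | (rw [abs_zero]; positivity)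
        · refine Real.iSup_le (fun i => ?_) hbound
          show |(0:ℝ)| ≤ 2*M^2
          rw [abs_zero]; positivity
        · refine Real.iSup_le (fun k => ?_) hbound
          refine matSup_le hbound ?_
          intro i j
          show |(if ((i:ℕ) < N ∧ (j:ℕ) < N) ∨ (¬ (i:ℕ) < N ∧ ¬ (j:ℕ) < N)
              then ((N:ℕ):ℝ)⁻¹ else 0)| ≤ 2*M^2
          split_ifs
          · exact hbNinv
          · rw [abs_zero]; positivity
        · refine Real.iSup_le (fun k => ?_) hbound
          refine Real.iSup_le (fun i => ?_) hbound
          show |(0:ℝ)| ≤ 2*M^2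
          rw [abs_zero]; positivity
        · refine matSup_le hbound ?_
          intro i j
          show |(if i = 0 then (if (j:ℕ) < N then g else -g)
              else if i = 1 then (if (j:ℕ) < N then -g' else g') else 0)| ≤ 2*M^2
          split_ifs <;>
            first
              | exact hbg
              | (rw [abs_neg]; exact hbg)
              | exact hbg'
              | (rw [abs_neg]; exact hbg')
              | (rw [abs_zero]; positivity)
        · refine Real.iSup_le (fun i => ?_) hbound
          show |(0:ℝ)| ≤ 2*M^2
          rw [abs_zero]; positivity
    · -- evaluation
      have hheads : ∀ j : Fin D,
          (mkHead ℓ a v μ (μ * c j) ⟨(j:ℕ), hjlt j⟩ ⟨D + (j:ℕ), hJlt j⟩).eval H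
          = Matrix.of fun i t =>
              if i = 1 ∧ t = (⟨D + (j:ℕ), hJlt j⟩ : Fin ℓ)
              then v * (μ * H 0 (⟨(j:ℕ), hjlt j⟩ : Fin ℓ) + μ * c j) else 0 :=
        fun j => mkHead_eval H h2 h3 hE4 a v μ (μ * c j) ha hv_def hv0.le _ _
      set uval : Fin ℓ → ℝ := fun t =>
        if h : D ≤ (t:ℕ) ∧ (t:ℕ) < 2*D
        then ε * (x ⟨(t:ℕ)-D, by omega⟩ + c ⟨(t:ℕ)-D, by omega⟩) else 0 with huval
      have hMHA : (∑ j : Fin D,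
          (mkHead ℓ a v μ (μ * c j) ⟨(j:ℕ), hjlt j⟩ ⟨D + (j:ℕ), hJlt j⟩).eval H)
          = Matrix.of (fun i t => if i = 1 then uval t else 0) := by
        ext i t
        rw [Matrix.sum_apply]
        rw [Finset.sum_congr rfl (fun j _ => by rw [hheads j])]
        simp only [Matrix.of_apply]
        by_cases hi : i = 1
        · subst hi
          by_cases hr : D ≤ (t:ℕ) ∧ (t:ℕ) < 2*D
          · have hj0lt : (t:ℕ) - D < D := by omega
            rw [Finset.sum_eq_single (⟨(t:ℕ)-D, hj0lt⟩ : Fin D)]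
            · rw [if_pos ⟨rfl, by apply Fin.ext; simp; omega⟩, if_pos rfl]
              simp only [huval]
              rw [dif_pos hr]
              have hxx := hx0 ⟨(t:ℕ)-D, by omega⟩ (by simpa using hj0lt)
              simp only [hxx]
              rw [hε_def]
              ring
            · intro j _ hjne
              rw [if_neg]
              rintro ⟨-, hteq⟩
              apply hjne
              apply Fin.ext
              have : (t:ℕ) = D + (j:ℕ) := by rw [hteq]
              simp
              omega
            · intro habs
              exact absurd (Finset.mem_univ _) habs
          · rw [if_pos rfl]
            simp only [huval]
            rw [dif_neg hr]
            apply Finset.sum_eq_zero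
            intro j _
            rw [if_neg]
            rintro ⟨-, hteq⟩
            have : (t:ℕ) = D + (j:ℕ) := by rw [hteq]
            have := j.isLt
            omega
        · simp [hi]
      rw [Block_eval_def]
      rw [show (Block.heads (de := 5)
          ⟨fun j => mkHead ℓ a v μ (μ * c j) ⟨(j:ℕ), hjlt j⟩ ⟨D + (j:ℕ), hJlt j⟩,
            mkFFN N aF g g'⟩)
          = fun j => mkHead ℓ a v μ (μ * c j) ⟨(j:ℕ), hjlt j⟩ ⟨D + (j:ℕ), hJlt j⟩ from rfl]
      rw [show (Block.ffn (de := 5)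
          ⟨fun j => mkHead ℓ a v μ (μ * c j) ⟨(j:ℕ), hjlt j⟩ ⟨D + (j:ℕ), hJlt j⟩,
            mkFFN N aF g g'⟩) = mkFFN N aF g g' from rfl]
      rw [hMHA]
      have hg1 : g * (N:ℝ) * aF * ε = 1 := by
        rw [hg_def]
        field_simp
      have hg'1 : g' * (N:ℝ) * aF = 1 := by
        rw [hg'_def]
        field_simp
      ext i t
      rw [Matrix.add_apply, Matrix.of_apply, Matrix.of_apply]
      rw [mkFFN_eval N hN0 aF g g' haF.le]
      simp only [Matrix.add_apply, Matrix.of_apply, eq_self_iff_true, if_true, hE1 t, add_zero]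
      by_cases hi0 : i = 0
      · subst hi0
        rw [if_pos rfl, if_neg (by decide : ¬ (0:Fin 5) = 1), zero_add]
        by_cases hr : D ≤ (t:ℕ) ∧ (t:ℕ) < 2*D
        · simp only [huval]
          rw [dif_pos hr, dif_pos hr]
          simp only [if_true]
          rw [hx0' t hr.1, add_zero]
          rw [show g * (N:ℝ) * aF * (ε * (x ⟨(t:ℕ)-D, by omega⟩ + c ⟨(t:ℕ)-D, by omega⟩))
              = (g * (N:ℝ) * aF * ε) * (x ⟨(t:ℕ)-D, by omega⟩ + c ⟨(t:ℕ)-D, by omega⟩)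
              from by ring, hg1, one_mul]
        · simp only [huval]
          rw [dif_neg hr, dif_neg hr, mul_zero, zero_add]
      · rw [if_neg hi0]
        by_cases hi1 : i = 1
        · subst hi1
          rw [if_pos rfl, if_pos rfl]
          have hRHS : (if h : D ≤ (t:ℕ) ∧ (t:ℕ) < 2*D then
              (if (1:Fin 5) = 0 then x ⟨(t:ℕ)-D, by omega⟩ + c ⟨(t:ℕ)-D, by omega⟩ else H 1 t)
              else H 1 t) = H 1 t := by
            by_cases hr : D ≤ (t:ℕ) ∧ (t:ℕ) < 2*D
            · rw [dif_pos hr, if_neg (by decide : ¬ (1:Fin 5) = 0)]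
            · rw [dif_neg hr]
          rw [hRHS, hE1 t, add_zero]
          try simp only [if_true, eq_self_iff_true]
          rw [show g' * (N:ℝ) * aF * uval t = (g' * (N:ℝ) * aF) * uval t from by ring, hg'1,
            one_mul]
          ring
        · rw [if_neg hi1, if_neg hi1, zero_add, zero_add]
          by_cases hr : D ≤ (t:ℕ) ∧ (t:ℕ) < 2*D
          · rw [dif_pos hr, if_neg hi0]
          · rw [dif_neg hr]

end
end Paper
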